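/- For every σ ∈ ℝ^n_+, the matrix 𝓕(σ) is positive semidefinite, i.e., gᵀ 𝓕(σ) g ≥ 0 for all g ∈ ℝ^m. -/
import Mathlib


open scoped BigOperators

/-- For every `σ ∈ ℝ^n_+`, the matrix `𝓕(σ)` is positive
semidefinite, i.e., `gᵀ 𝓕(σ) g ≥ 0` for all `g ∈ ℝ^m`. -/
theorem stmt_8
    {H : Type*} [NormedAddCommGroup H] [InnerProductSpace ℝ H] [CompleteSpace H]
    {n m : ℕ}
    (b0 : H →L[ℝ] H →L[ℝ] ℝ) (b : Fin n → H →L[ℝ] H →L[ℝ] ℝ)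
    (hb0symm : ∀ u v : H, b0 u v = b0 v u)
    (hb0pos : ∀ v : H, 0 ≤ b0 v v)
    (hbsymm : ∀ i, ∀ u v : H, b i u v = b i v u)
    (hbpos : ∀ i, ∀ v : H, 0 ≤ b i v v)
    (C β : ℝ) (hβ : 0 < β) (hCβ : β ≤ C)
    (hcoer : ∀ v : H, β * ‖v‖ ^ 2 ≤ b0 v v + ∑ i, b i v v)
    (hbound : ∀ v : H, b0 v v + ∑ i, b i v v ≤ C * ‖v‖ ^ 2)
    (u : (Fin n → ℝ) → (H →L[ℝ] ℝ) → H)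
    (hu : ∀ σ : Fin n → ℝ, (∀ i, 0 < σ i) → ∀ l : H →L[ℝ] ℝ,
      ∀ v : H, b0 (u σ l) v + ∑ i, σ i * b i (u σ l) v = l v)
    (l : Fin m → (H →L[ℝ] ℝ)) :
    ∀ σ : Fin n → ℝ, (∀ i, 0 < σ i) →
      ∀ g : Fin m → ℝ,
        0 ≤ ∑ j, ∑ k, g j * (l k (u σ (l j))) * g k := by
  intro σ hσ g
  set w : H := ∑ j, g j • u σ (l j) with hw
  have key : ∀ j k : Fin m, (l k) (u σ (l j)) =
      b0 (u σ (l k)) (u σ (l j)) + ∑ i, σ i * b i (u σ (l k)) (u σ (l j)) :=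
    fun j k => (hu σ hσ (l k) (u σ (l j))).symm
  have hb0w : b0 w w = ∑ j, ∑ k, g j * g k * b0 (u σ (l j)) (u σ (l k)) := by
    simp only [hw, map_sum, map_smul, ContinuousLinearMap.coe_sum',
      Finset.sum_apply, ContinuousLinearMap.coe_smul', Pi.smul_apply, smul_eq_mul,
      Finset.mul_sum]
    apply Finset.sum_congr rfl; intro j _
    apply Finset.sum_congr rfl; intro k _
    rw [hb0symm (u σ (l k)) (u σ (l j))]; ring
  have hbw : ∀ i, b i w w = ∑ j, ∑ k, g j * g k * b i (u σ (l j)) (u σ (l k)) := by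
    intro i
    simp only [hw, map_sum, map_smul, ContinuousLinearMap.coe_sum',
      Finset.sum_apply, ContinuousLinearMap.coe_smul', Pi.smul_apply, smul_eq_mul,
      Finset.mul_sum]
    apply Finset.sum_congr rfl; intro j _
    apply Finset.sum_congr rfl; intro k _
    rw [hbsymm i (u σ (l k)) (u σ (l j))]; ring
  have hexpand : ∑ j, ∑ k, g j * (l k (u σ (l j))) * g k
      = b0 w w + ∑ i, σ i * b i w w := by
    rw [hb0w]
    have h2 : (∑ i, σ i * b i w w)
        = ∑ j, ∑ k, ∑ i, σ i * (g j * g k * b i (u σ (l j)) (u σ (l k))) := by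
      have := fun i => hbw i
      simp only [this, Finset.mul_sum]
      rw [Finset.sum_comm]
      exact Finset.sum_congr rfl fun j _ => Finset.sum_comm
    rw [h2, ← Finset.sum_add_distrib]
    apply Finset.sum_congr rfl; intro j _
    rw [← Finset.sum_add_distrib]
    apply Finset.sum_congr rfl; intro k _
    rw [key j k, hb0symm (u σ (l k)) (u σ (l j))]
    have hs : ∀ i, b i (u σ (l k)) (u σ (l j)) = b i (u σ (l j)) (u σ (l k)) :=
      fun i => hbsymm i _ _
    simp only [hs]
    rw [mul_add, add_mul, Finset.mul_sum, Finset.sum_mul]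
    congr 1
    · ring
    · exact Finset.sum_congr rfl fun i _ => by ring
  rw [hexpand]
  have h1 : 0 ≤ b0 w w := hb0pos w
  have h2 : 0 ≤ ∑ i, σ i * b i w w :=
    Finset.sum_nonneg fun i _ => mul_nonneg (hσ i).le (hbpos i w)
  linarith
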